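/- If κ is a regular infinite cardinal and λ > κ is a Mahlo cardinal, then the Easton collapse E(κ,λ) has precaliber λ: for every A ⊆ E(κ,λ) with |A| = λ there is B ⊆ A with |B| = λ such that every finite subset of B has a lower bound in E(κ,λ). -/

import Mathlib

open Cardinal

universe u


/-- A condition in the Levy collapse `Col(κ,o)` (collapsing the ordinal `o` to `κ`):
a partial function from `κ` to `o` whose domain has cardinality `< κ`. -/
def IsLevyCond (κ : Cardinal.{u}) (o : Ordinal.{u}) (f : Ordinal.{u} → Option Ordinal.{u}) :
    Prop :=
  (∀ a, f a ≠ none → a < κ.ord) ∧ (∀ a b, f a = some b → b < o) ∧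
    #(↥{a : Ordinal.{u} | f a ≠ none}) < Cardinal.lift.{u + 1} κ

/-- The coordinates of the Easton collapse `E(κ,λ)`: inaccessible cardinals in `(κ,λ)`. -/
def IsEastonIndex (κ lam α : Cardinal.{u}) : Prop :=
  α.IsInaccessible ∧ κ < α ∧ α < lam

/-- A condition of the Easton collapse `E(κ,λ)`, the Easton-support product of
`Col(κ,α)` over inaccessible `α ∈ (κ,λ)`: a function `p` assigning to each inaccessible
`α ∈ (κ,λ)` a condition `p(α) ∈ Col(κ,α)` (and the empty condition to every other
coordinate), such that for every regular cardinal `γ ≤ λ` the set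
`{α < γ : p(α) ≠ ∅}` has cardinality `< γ`. -/
def IsEastonCond (κ lam : Cardinal.{u}) (p : Cardinal.{u} → Ordinal.{u} → Option Ordinal.{u}) :
    Prop :=
  (∀ α, IsEastonIndex κ lam α → IsLevyCond κ α.ord (p α)) ∧
  (∀ α, ¬ IsEastonIndex κ lam α → p α = fun _ => none) ∧
  (∀ γ : Cardinal.{u}, γ.IsRegular → γ ≤ lam →
    #(↥{α : Cardinal.{u} | α < γ ∧ p α ≠ fun _ => none}) < Cardinal.lift.{u + 1} γ)

/-- The Easton collapse `E(κ,λ)`. -/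
def EastonCol (κ lam : Cardinal.{u}) : Type (u + 1) :=
  {p : Cardinal.{u} → Ordinal.{u} → Option Ordinal.{u} // IsEastonCond κ lam p}

/-- The coordinatewise order on `E(κ,λ)`: `p ≤ q` iff `p(α) ⊇ q(α)` for all `α`. -/
def EastonCol.le {κ lam : Cardinal.{u}} (p q : EastonCol κ lam) : Prop :=
  ∀ α a b, q.1 α a = some b → p.1 α a = some b



/-- Pick a strictly increasing family from an unbounded set, dodging bounds `d`. -/
lemma aux_pick (c : Cardinal.{u}) (hc : c.IsRegular) (s : Set Ordinal.{u})
    (hsub : s ⊆ Set.Iio c.ord)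
    (hunb : ∀ β < c.ord, ∃ x ∈ s, β ≤ x)
    (d : Ordinal.{u} → Ordinal.{u}) (hd : ∀ o < c.ord, d o < c.ord) :
    ∃ F : Ordinal.{u} → Ordinal.{u},
      (∀ j < c.ord, F j ∈ s) ∧
      (∀ k j, k < j → j < c.ord → F k < F j ∧ d (F k) ≤ F j) := by
  classical
  let F : Ordinal.{u} → Ordinal.{u} :=
    Ordinal.lt_wf.fix (fun j rec =>
      sInf {x | x ∈ s ∧ ∀ k (h : k < j), rec k h < x ∧ d (rec k h) ≤ x})
  have hFeq : ∀ j, F j = sInf {x | x ∈ s ∧ ∀ k (_ : k < j), F k < x ∧ d (F k) ≤ x} := by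
    intro j
    exact WellFounded.fix_eq _ _ _
  have main : ∀ j, j < c.ord → F j ∈ s ∧ ∀ k, k < j → F k < F j ∧ d (F k) ≤ F j := by
    intro j
    induction j using Ordinal.induction with
    | h j IH =>
      intro hj
      have hblt : Ordinal.blsub j (fun k _ => max (F k) (d (F k))) < c.ord := by
        apply Ordinal.blsub_lt_ord
        · rw [hc.cof_eq]; exact Cardinal.lt_ord.1 hj
        · intro k hk
          have hFk : F k ∈ s := (IH k hk (hk.trans hj)).1
          exact max_lt (hsub hFk) (hd _ (hsub hFk))
      obtain ⟨x, hxs, hbx⟩ := hunb _ hblt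
      have hne : {x | x ∈ s ∧ ∀ k (_ : k < j), F k < x ∧ d (F k) ≤ x}.Nonempty := by
        refine ⟨x, hxs, fun k hk => ?_⟩
        have := (Ordinal.lt_blsub (fun k _ => max (F k) (d (F k))) k hk).trans_le hbx
        exact ⟨(le_max_left _ _).trans_lt this, ((le_max_right _ _).trans_lt this).le⟩
      have hmem := csInf_mem hne
      rw [← hFeq j] at hmem
      exact ⟨hmem.1, fun k hk => hmem.2 k hk⟩
  exact ⟨F, fun j hj => (main j hj).1, fun k j hk hj => (main j hj).2 k hk⟩

/-- A set of ordinals of size `< c` below a regular `c.ord` is bounded. -/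
lemma aux_bounded (c : Cardinal.{u}) (hc : c.IsRegular) (s : Set Ordinal.{u})
    (hsub : ∀ x ∈ s, x < c.ord) (hcard : #(↥s) < Cardinal.lift.{u+1} c) :
    ∃ δ < c.ord, ∀ x ∈ s, x < δ := by
  by_contra h
  push_neg at h
  obtain ⟨F, hF1, hF2⟩ := aux_pick c hc s (fun x hx => hsub x hx)
    (fun β hβ => by obtain ⟨x, hx, hbx⟩ := h β hβ; exact ⟨x, hx, hbx⟩)
    (fun _ => 0) (fun o _ => by
      rw [Cardinal.lt_ord, Ordinal.card_zero]; exact hc.pos)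
  have hinj : Function.Injective (fun j : ↥(Set.Iio c.ord) => (⟨F j.1, hF1 j.1 j.2⟩ : ↥s)) := by
    intro j j' hjj
    have hv : F j.1 = F j'.1 := congrArg Subtype.val hjj
    rcases lt_trichotomy j.1 j'.1 with h' | h' | h'
    · exact absurd hv (hF2 _ _ h' j'.2).1.ne
    · exact Subtype.ext h'
    · exact absurd hv.symm (hF2 _ _ h' j.2).1.ne
  have := Cardinal.mk_le_of_injective hinj
  rw [Ordinal.mk_Iio_ordinal, Cardinal.card_ord] at this
  exact absurd (this.trans_lt hcard) (lt_irrefl _)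


/-- Possible "heads" with support and values below `γ` and domains below `κ.ord`. -/
def HSet (κ : Cardinal.{u}) (γ : Ordinal.{u}) :
    Set (Cardinal.{u} → Ordinal.{u} → Option Ordinal.{u}) :=
  {q | ∀ α a, (q α a ≠ none → α.ord < γ ∧ a < κ.ord) ∧ ∀ b, q α a = some b → b < γ}

lemma aux_pmap_val {γ : Ordinal.{u}} (o : Option Ordinal.{u}) (H : ∀ b ∈ o, b < γ) :
    Option.map Subtype.val (Option.pmap (fun b (hb : b < γ) => (⟨b, hb⟩ : ↥(Set.Iio γ))) o H)
      = o := by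
  cases o <;> rfl

lemma HSet_card (κ lam : Cardinal.{u}) (γ : Ordinal.{u}) (hsl : lam.IsStrongLimit)
    (hℵ : ℵ₀ < lam) (hκ : κ < lam) (hγ : γ < lam.ord) :
    #(↥(HSet κ γ)) < Cardinal.lift.{u+1} lam := by
  classical
  set Φ : ↥(HSet κ γ) → (↥(Set.Iio γ) → ↥(Set.Iio κ.ord) → Option ↥(Set.Iio γ)) :=
    fun q β a => Option.pmap (fun b (hb : b < γ) => (⟨b, hb⟩ : ↥(Set.Iio γ)))
      (q.1 β.1.card a.1) (fun b hb => (q.2 β.1.card a.1).2 b hb) with hΦ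
  have hinj : Function.Injective Φ := by
    intro q1 q2 h
    apply Subtype.ext
    funext α a
    by_cases h1 : α.ord < γ
    · by_cases h2 : a < κ.ord
      · have h3 := congrFun (congrFun h ⟨α.ord, h1⟩) ⟨a, h2⟩
        have h4 := congrArg (Option.map Subtype.val) h3
        rw [hΦ] at h4
        simp only at h4
        rw [aux_pmap_val, aux_pmap_val, Cardinal.card_ord] at h4
        exact h4
      · have e1 : q1.1 α a = none := by
          by_contra hne; exact h2 ((q1.2 α a).1 hne).2
        have e2 : q2.1 α a = none := by
          by_contra hne; exact h2 ((q2.2 α a).1 hne).2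
        rw [e1, e2]
    · have e1 : q1.1 α a = none := by
        by_contra hne; exact h1 ((q1.2 α a).1 hne).1
      have e2 : q2.1 α a = none := by
        by_contra hne; exact h1 ((q2.2 α a).1 hne).1
      rw [e1, e2]
  have hle := Cardinal.mk_le_of_injective hinj
  have harrow : #(↥(Set.Iio γ) → ↥(Set.Iio κ.ord) → Option ↥(Set.Iio γ))
      = ((Cardinal.lift.{u+1} γ.card + 1) ^ Cardinal.lift.{u+1} κ) ^ Cardinal.lift.{u+1} γ.card := by
    rw [← Cardinal.power_def, ← Cardinal.power_def, Cardinal.mk_option,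
      Ordinal.mk_Iio_ordinal, Ordinal.mk_Iio_ordinal, Cardinal.card_ord]
  rw [harrow] at hle
  have heq : ((Cardinal.lift.{u+1} γ.card + 1) ^ Cardinal.lift.{u+1} κ) ^ Cardinal.lift.{u+1} γ.card
      = Cardinal.lift.{u+1} (((γ.card + 1) ^ (κ * γ.card))) := by
    rw [Cardinal.lift_power, Cardinal.lift_mul, Cardinal.lift_add, Cardinal.lift_one,
      Cardinal.power_mul]
  rw [heq] at hle
  refine hle.trans_lt (Cardinal.lift_lt.2 ?_)
  have hγc : γ.card < lam := Cardinal.lt_ord.1 hγ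
  have ha : γ.card + 1 < lam := Cardinal.add_lt_of_lt hℵ.le hγc (one_lt_aleph0.trans hℵ)
  have hb : κ * γ.card < lam := Cardinal.mul_lt_of_lt hℵ.le hκ hγc
  calc (γ.card + 1) ^ (κ * γ.card) ≤ (2 ^ (γ.card + 1)) ^ (κ * γ.card) :=
        Cardinal.power_le_power_right (Cardinal.cantor _).le
    _ = 2 ^ ((γ.card + 1) * (κ * γ.card)) := (Cardinal.power_mul).symm
    _ < lam := hsl.two_power_lt (Cardinal.mul_lt_of_lt hℵ.le ha hb)


/-- `C` is a closed unbounded subset of the ordinal `lam`. -/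
def IsClubIn (C : Set Ordinal.{u}) (lam : Ordinal.{u}) : Prop :=
  C ⊆ Set.Iio lam ∧ (∀ β < lam, ∃ γ ∈ C, β ≤ γ) ∧
    (∀ β < lam, β ≠ 0 → (∀ γ < β, ∃ δ ∈ C, γ < δ ∧ δ < β) → β ∈ C)

/-- `λ` is Mahlo: `λ` is inaccessible and the set of inaccessible cardinals below `λ`
is stationary in `λ`, i.e. it meets every closed unbounded subset of `λ`. -/
def IsMahlo (lam : Cardinal.{u}) : Prop :=
  lam.IsInaccessible ∧
    ∀ C : Set Ordinal.{u}, IsClubIn C lam.ord →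
      ∃ o ∈ C, ∃ α : Cardinal.{u}, α.IsInaccessible ∧ o = α.ord



lemma aux_club (lam : Cardinal.{u}) (hreg : lam.IsRegular) (hℵ : ℵ₀ < lam)
    (g : Ordinal.{u} → Ordinal.{u}) (hg : ∀ γ < lam.ord, g γ < lam.ord) :
    IsClubIn {o | o < lam.ord ∧ ∀ γ < o, g γ < o} lam.ord := by
  have hlim : Order.IsSuccLimit lam.ord := Cardinal.isSuccLimit_ord hreg.aleph0_le
  refine ⟨fun o ho => ho.1, ?_, ?_⟩
  · intro β hβ
    set a : ℕ → Ordinal.{u} := fun n =>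
      Nat.rec (β + 1) (fun _ x => max (x + 1) (Ordinal.blsub x (fun γ _ => g γ))) n with ha
    have haO : ∀ n, a n < lam.ord := by
      intro n
      induction n with
      | zero =>
        show β + 1 < lam.ord
        rw [Ordinal.add_one_eq_succ]
        exact hlim.succ_lt hβ
      | succ n ih =>
        apply max_lt
        · rw [Ordinal.add_one_eq_succ]; exact hlim.succ_lt ih
        · apply Ordinal.blsub_lt_ord
          · rw [hreg.cof_eq]; exact Cardinal.lt_ord.1 ih
          · intro γ hγ; exact hg γ (hγ.trans ih)
    set ℓ : Ordinal.{u} := ⨆ n : ULift.{u} ℕ, a n.down with hℓ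
    have hbdd : BddAbove (Set.range fun n : ULift.{u} ℕ => a n.down) :=
      Ordinal.bddAbove_range _
    have hℓO : ℓ < lam.ord := by
      refine Ordinal.iSup_lt_ord ?_ (fun n : ULift.{u} ℕ => haO n.down)
      rw [hreg.cof_eq]
      simpa using hℵ
    have hle : ∀ n, a n ≤ ℓ := fun n => le_ciSup hbdd (ULift.up n)
    refine ⟨ℓ, ⟨hℓO, ?_⟩, le_trans (le_self_add (a := β) (b := 1)) (hle 0)⟩
    intro γ hγ
    rw [hℓ, lt_ciSup_iff hbdd] at hγ
    obtain ⟨n, hn⟩ := hγ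
    have h1 : g γ < Ordinal.blsub (a n.down) (fun γ _ => g γ) :=
      Ordinal.lt_blsub (fun γ _ => g γ) γ hn
    have h2 : Ordinal.blsub (a n.down) (fun γ _ => g γ) ≤ a (n.down + 1) := le_max_right _ _
    exact lt_of_lt_of_le (h1.trans_le h2) (hle (n.down + 1))
  · intro β hβ hβ0 hcl
    refine ⟨hβ, ?_⟩
    intro γ hγ
    obtain ⟨δ, hδC, hγδ, hδβ⟩ := hcl γ hγ
    exact (hδC.2 γ hγδ).trans hδβ



lemma aux_finUnion {κ lam : Cardinal.{u}} (γ : Cardinal.{u}) (hγ : γ.IsRegular) (hγlam : γ ≤ lam)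
    (hγℵ : ℵ₀ ≤ Cardinal.lift.{u+1} γ) (T : Set (EastonCol κ lam)) (hT : T.Finite) :
    #(↥(⋃ x ∈ T, {β : Cardinal.{u} | β < γ ∧ x.1 β ≠ fun _ => none})) <
      Cardinal.lift.{u+1} γ := by
  refine @Set.Finite.induction_on (EastonCol κ lam)
    (fun T _ => #(↥(⋃ x ∈ T, {β : Cardinal.{u} | β < γ ∧ x.1 β ≠ fun _ => none})) <
      Cardinal.lift.{u+1} γ) T hT ?_ ?_
  · simp only [Set.biUnion_empty, Cardinal.mk_emptyCollection]
    exact lt_of_lt_of_le Cardinal.aleph0_pos hγℵ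
  · intro a T' _ _ IH
    rw [Set.biUnion_insert]
    exact lt_of_le_of_lt (Cardinal.mk_union_le _ _)
      (Cardinal.add_lt_of_lt hγℵ (a.2.2.2 γ hγ hγlam) IH)

/-- If `κ` is a regular infinite cardinal and `λ > κ` is Mahlo, then the Easton collapse
`E(κ,λ)` has precaliber `λ`: every `A ⊆ E(κ,λ)` of size `λ` has a subset `B` of size `λ`
every finite subset of which has a lower bound in `E(κ,λ)`. -/
theorem eastonCol_precaliber (κ lam : Cardinal.{u}) (hκ : κ.IsRegular) (hκlam : κ < lam)
    (hM : IsMahlo lam) (A : Set (EastonCol κ lam)) (hA : #(↥A) = Cardinal.lift.{u + 1} lam) :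
    ∃ B : Set (EastonCol κ lam), B ⊆ A ∧ #(↥B) = Cardinal.lift.{u + 1} lam ∧
      ∀ S : Set (EastonCol κ lam), S ⊆ B → S.Finite →
        ∃ r : EastonCol κ lam, ∀ p ∈ S, EastonCol.le r p := by
  classical
  obtain ⟨hℵlam, hreg, hsl⟩ := isInaccessible_def.1 hM.1
  have hlim : Order.IsSuccLimit lam.ord := Cardinal.isSuccLimit_ord hreg.aleph0_le
  have hO0 : (0 : Ordinal.{u}) < lam.ord := by
    rw [Cardinal.lt_ord, Ordinal.card_zero]; exact hreg.pos
  -- enumerate A by ordinals below lam.ord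
  have hcard : #(↥(Set.Iio lam.ord)) = #(↥A) := by
    rw [Ordinal.mk_Iio_ordinal, Cardinal.card_ord, hA]
  obtain ⟨P⟩ := Cardinal.eq.1 hcard
  let pf : Ordinal.{u} → Cardinal.{u} → Ordinal.{u} → Option Ordinal.{u} :=
    fun o => if h : o < lam.ord then ((P ⟨o, h⟩ : ↥A) : EastonCol κ lam).1 else fun _ _ => none
  have hpf : ∀ o (h : o < lam.ord), pf o = ((P ⟨o, h⟩ : ↥A) : EastonCol κ lam).1 :=
    fun o h => dif_pos h
  have hcond : ∀ o, o < lam.ord → IsEastonCond κ lam (pf o) := by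
    intro o h; rw [hpf o h]; exact ((P ⟨o, h⟩ : ↥A) : EastonCol κ lam).2
  -- bounds on supports
  have suppB : ∀ p : Cardinal.{u} → Ordinal.{u} → Option Ordinal.{u}, IsEastonCond κ lam p →
      ∀ γ : Cardinal.{u}, γ.IsRegular → γ ≤ lam →
      ∃ δ < γ.ord, ∀ β : Cardinal.{u}, β < γ → p β ≠ (fun _ => none) → β.ord < δ := by
    intro p hp γ hγ hγlam
    obtain ⟨δ, hδ, hbd⟩ := aux_bounded γ hγ
      ((fun β : Cardinal.{u} => β.ord) '' {β | β < γ ∧ p β ≠ fun _ => none})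
      (by rintro x ⟨β, ⟨hβ, _⟩, rfl⟩; exact Cardinal.ord_lt_ord.2 hβ)
      (Cardinal.mk_image_le.trans_lt (hp.2.2 γ hγ hγlam))
    exact ⟨δ, hδ, fun β hβγ hβne => hbd _ ⟨β, ⟨hβγ, hβne⟩, rfl⟩⟩
  have hdex : ∀ o, o < lam.ord → ∃ δ, δ < lam.ord ∧
      ∀ β : Cardinal.{u}, pf o β ≠ (fun _ => none) → β.ord < δ := by
    intro o h
    obtain ⟨δ, hδ, hbd⟩ := suppB (pf o) (hcond o h) lam hreg le_rfl
    refine ⟨δ, hδ, fun β hβ => ?_⟩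
    have hβlam : β < lam := by
      by_contra hc
      exact hβ ((hcond o h).2.1 β (fun hidx => hc hidx.2.2))
    exact hbd β hβlam hβ
  let d : Ordinal.{u} → Ordinal.{u} := fun o =>
    if h : o < lam.ord then Classical.choose (hdex o h) else 0
  have hd : ∀ o, o < lam.ord → d o < lam.ord ∧
      ∀ β : Cardinal.{u}, pf o β ≠ (fun _ => none) → β.ord < d o := by
    intro o h
    have hs := Classical.choose_spec (hdex o h)
    have hde : d o = Classical.choose (hdex o h) := dif_pos h
    rw [hde]
    exact hs
  -- heads
  let head : Ordinal.{u} → Cardinal.{u} → Ordinal.{u} → Option Ordinal.{u} :=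
    fun o β => if β.ord < o then pf o β else fun _ => none
  have headeq : ∀ o β, head o β = if β.ord < o then pf o β else fun _ => none := fun _ _ => rfl
  have headH : ∀ o, o < lam.ord → (∃ α : Cardinal.{u}, α.IsInaccessible ∧ o = α.ord) →
      ∃ δ < o, head o ∈ HSet κ δ := by
    rintro o hoO ⟨α, hα, rfl⟩
    have hαlam : α < lam := Cardinal.ord_lt_ord.1 hoO
    obtain ⟨δ, hδ, hbd⟩ := suppB (pf α.ord) (hcond _ hoO) α hα.isRegular hαlam.le
    refine ⟨δ, hδ, fun β a => ?_⟩
    by_cases hβ : β.ord < α.ord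
    · have hhead : head α.ord β = pf α.ord β := if_pos hβ
      have hidx : pf α.ord β ≠ (fun _ => none) → IsEastonIndex κ lam β := by
        intro hpne
        by_contra hc
        exact hpne ((hcond _ hoO).2.1 β hc)
      constructor
      · intro hne
        rw [hhead] at hne
        have hpne : pf α.ord β ≠ (fun _ => none) := fun he => hne (by rw [he])
        have hlevy := (hcond _ hoO).1 β (hidx hpne)
        exact ⟨hbd β (Cardinal.ord_lt_ord.1 hβ) hpne, hlevy.1 a hne⟩
      · intro b hb
        rw [hhead] at hb
        have hpne : pf α.ord β ≠ (fun _ => none) := fun he => by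
          rw [he] at hb; simp at hb
        have hlevy := (hcond _ hoO).1 β (hidx hpne)
        exact lt_trans (hlevy.2.1 a b hb) (hbd β (Cardinal.ord_lt_ord.1 hβ) hpne)
    · have hhead : head α.ord β = fun _ => none := if_neg hβ
      rw [hhead]
      exact ⟨fun hne => absurd rfl hne, fun b hb => by simp at hb⟩
  -- the Fodor argument
  let Fib : (Cardinal.{u} → Ordinal.{u} → Option Ordinal.{u}) → Set Ordinal.{u} := fun q =>
    {o | o < lam.ord ∧ (∃ α : Cardinal.{u}, α.IsInaccessible ∧ o = α.ord) ∧ head o = q}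
  have main : ∃ q, ∀ β < lam.ord, ∃ o ∈ Fib q, β ≤ o := by
    by_contra hmain
    push_neg at hmain
    have hmain' : ∀ q, ∃ β, β < lam.ord ∧ ∀ o ∈ Fib q, o < β := hmain
    have hgex : ∀ γ, γ < lam.ord → ∃ δ, δ < lam.ord ∧
        ∀ x ∈ (fun q => Classical.choose (hmain' q)) '' (HSet κ γ), x < δ := by
      intro γ hγ
      apply aux_bounded lam hreg
      · rintro x ⟨q, _, rfl⟩
        exact (Classical.choose_spec (hmain' q)).1
      · exact Cardinal.mk_image_le.trans_lt (HSet_card κ lam γ hsl hℵlam hκlam hγ)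
    let g : Ordinal.{u} → Ordinal.{u} := fun γ =>
      if h : γ < lam.ord then Classical.choose (hgex γ h) else 0
    have hg : ∀ γ, γ < lam.ord → g γ < lam.ord ∧
        ∀ q ∈ HSet κ γ, Classical.choose (hmain' q) < g γ := by
      intro γ h
      have hs := Classical.choose_spec (hgex γ h)
      have hge : g γ = Classical.choose (hgex γ h) := dif_pos h
      rw [hge]
      exact ⟨hs.1, fun q hq => hs.2 _ ⟨q, hq, rfl⟩⟩
    obtain ⟨o, hoC, α, hα, rfl⟩ := hM.2 _ (aux_club lam hreg hℵlam g (fun γ h => (hg γ h).1))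
    obtain ⟨δ, hδ, hH⟩ := headH α.ord hoC.1 ⟨α, hα, rfl⟩
    have h1 : α.ord ∈ Fib (head α.ord) := ⟨hoC.1, ⟨α, hα, rfl⟩, rfl⟩
    have h2 : α.ord < Classical.choose (hmain' (head α.ord)) :=
      (Classical.choose_spec (hmain' (head α.ord))).2 _ h1
    have h3 := (hg δ (hδ.trans hoC.1)).2 _ hH
    exact absurd ((h2.trans h3).trans (hoC.2 δ hδ)) (lt_irrefl _)
  obtain ⟨q, hq⟩ := main
  obtain ⟨o1, ho1, -⟩ := hq 0 hO0
  obtain ⟨ho1O, hGood1, hhead1⟩ := ho1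
  obtain ⟨δ0, hδ0, hqH0⟩ := headH o1 ho1O hGood1
  rw [hhead1] at hqH0
  have hqe : ∀ β : Cardinal.{u}, ¬ β.ord < δ0 → q β = fun _ => none := by
    intro β hβ
    funext a
    by_contra hne
    exact hβ ((hqH0 β a).1 hne).1
  -- pick a separated family inside the fiber
  have hδ0O : δ0 < lam.ord := hδ0.trans ho1O
  have hδ0succ : δ0 + 1 < lam.ord := by
    rw [Ordinal.add_one_eq_succ]; exact hlim.succ_lt hδ0O
  obtain ⟨F, hF1, hF2⟩ := aux_pick lam hreg {o | o ∈ Fib q ∧ δ0 < o}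
    (fun o ho => ho.1.1)
    (by
      intro β hβ
      obtain ⟨o, hoFib, hmo⟩ := hq (max β (δ0 + 1)) (max_lt hβ hδ0succ)
      refine ⟨o, ⟨hoFib, ?_⟩, (le_max_left _ _).trans hmo⟩
      calc δ0 < δ0 + 1 := by
            rw [Ordinal.add_one_eq_succ]; exact Order.lt_succ δ0
        _ ≤ o := (le_max_right _ _).trans hmo)
    d (fun o h => (hd o h).1)
  have heFib : ∀ j : ↥(Set.Iio lam.ord), F j.1 ∈ Fib q ∧ δ0 < F j.1 := fun j => hF1 j.1 j.2
  let e : ↥(Set.Iio lam.ord) → EastonCol κ lam :=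
    fun j => ((P ⟨F j.1, (heFib j).1.1⟩ : ↥A) : EastonCol κ lam)
  have he1 : ∀ j, (e j).1 = pf (F j.1) := fun j => (hpf _ _).symm
  have hehead : ∀ (j : ↥(Set.Iio lam.ord)) (β : Cardinal.{u}), β.ord < F j.1 →
      pf (F j.1) β = q β := by
    intro j β hβ
    have h' := congrFun ((heFib j).1.2.2) β
    rw [headeq, if_pos hβ] at h'
    exact h'
  have htail : ∀ (j : ↥(Set.Iio lam.ord)) (β : Cardinal.{u}),
      pf (F j.1) β ≠ (fun _ => none) → β.ord < d (F j.1) :=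
    fun j => (hd _ (heFib j).1.1).2
  have hnotlow : ∀ (j : ↥(Set.Iio lam.ord)) (β : Cardinal.{u}), ¬ β.ord < δ0 →
      pf (F j.1) β ≠ (fun _ => none) → F j.1 ≤ β.ord := by
    intro j β h1 h2
    by_contra h3
    push_neg at h3
    exact h2 (by rw [hehead j β h3, hqe β h1])
  have hpair : ∀ (j j' : ↥(Set.Iio lam.ord)) (β : Cardinal.{u}), ¬ β.ord < δ0 →
      pf (F j.1) β ≠ (fun _ => none) → pf (F j'.1) β ≠ (fun _ => none) → j = j' := by
    intro j j' β h0 h1 h2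
    rcases lt_trichotomy j.1 j'.1 with h | h | h
    · have hdle := (hF2 j.1 j'.1 h j'.2).2
      exact absurd ((htail j β h1).trans_le (hdle.trans (hnotlow j' β h0 h2)))
        (lt_irrefl _)
    · exact Subtype.ext h
    · have hdle := (hF2 j'.1 j.1 h j.2).2
      exact absurd ((htail j' β h2).trans_le (hdle.trans (hnotlow j β h0 h1)))
        (lt_irrefl _)
  -- the set B
  refine ⟨Set.range e, ?_, ?_, ?_⟩
  · rintro x ⟨j, rfl⟩
    exact (P ⟨F j.1, (heFib j).1.1⟩).2
  · have einj : Function.Injective e := by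
      intro j j' hjj
      have hv : F j.1 = F j'.1 := by
        have := Subtype.val_injective hjj
        have := P.injective this
        exact congrArg Subtype.val this
      rcases lt_trichotomy j.1 j'.1 with h | h | h
      · exact absurd hv (hF2 j.1 j'.1 h j'.2).1.ne
      · exact Subtype.ext h
      · exact absurd hv.symm (hF2 j'.1 j.1 h j.2).1.ne
    rw [Cardinal.mk_range_eq e einj, Ordinal.mk_Iio_ordinal, Cardinal.card_ord]
  -- compatibility of finite subsets
  intro S hSB hSfin
  have hlevy0 : ∀ o : Ordinal.{u}, IsLevyCond κ o (fun _ => none) := by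
    intro o
    refine ⟨fun a ha => absurd rfl ha, fun a b hb => by simp at hb, ?_⟩
    have he : {a : Ordinal.{u} | (fun _ => (none : Option Ordinal.{u})) a ≠ none} = ∅ := by
      ext a; simp
    rw [he, Cardinal.mk_emptyCollection]
    refine lt_of_lt_of_le Cardinal.aleph0_pos ?_
    rw [← Cardinal.lift_aleph0.{u+1, u}]
    exact Cardinal.lift_le.2 hκ.aleph0_le
  let r0 : Cardinal.{u} → Ordinal.{u} → Option Ordinal.{u} := fun β =>
    if h : ∃ y, y ∈ S ∧ y.1 β ≠ (fun _ => none) then (Classical.choose h).1 β else q β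
  have r0eq : ∀ β, r0 β =
      if h : ∃ y, y ∈ S ∧ y.1 β ≠ (fun _ => none) then (Classical.choose h).1 β else q β :=
    fun _ => rfl
  have hq_cases : ∀ β : Cardinal.{u}, q β = pf o1 β ∨ q β = (fun _ => none) := by
    intro β
    rw [← hhead1, headeq o1 β]
    split_ifs with h
    · exact Or.inl rfl
    · exact Or.inr rfl
  have hr0c : ∀ β : Cardinal.{u},
      (∃ pc, IsEastonCond κ lam pc ∧ r0 β = pc β) ∨ r0 β = (fun _ => none) := by
    intro β
    by_cases h : ∃ y, y ∈ S ∧ y.1 β ≠ (fun _ => none)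
    · refine Or.inl ⟨(Classical.choose h).1, (Classical.choose h).2, ?_⟩
      rw [r0eq, dif_pos h]
    · rw [r0eq, dif_neg h]
      rcases hq_cases β with h' | h'
      · exact Or.inl ⟨pf o1, hcond o1 ho1O, h'⟩
      · exact Or.inr h'
  have hc1 : ∀ β, IsEastonIndex κ lam β → IsLevyCond κ β.ord (r0 β) := by
    intro β hidx
    rcases hr0c β with ⟨pc, hpc, he⟩ | he
    · rw [he]; exact hpc.1 β hidx
    · rw [he]; exact hlevy0 _
  have hc2 : ∀ β, ¬ IsEastonIndex κ lam β → r0 β = fun _ => none := by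
    intro β hidx
    rcases hr0c β with ⟨pc, hpc, he⟩ | he
    · rw [he]; exact hpc.2.1 β hidx
    · exact he
  have hc3 : ∀ γ : Cardinal.{u}, γ.IsRegular → γ ≤ lam →
      #(↥{β : Cardinal.{u} | β < γ ∧ r0 β ≠ fun _ => none}) < Cardinal.lift.{u+1} γ := by
    intro γ hγ hγlam
    have hγℵ : ℵ₀ ≤ Cardinal.lift.{u+1} γ := by
      rw [← Cardinal.lift_aleph0.{u+1, u}]; exact Cardinal.lift_le.2 hγ.aleph0_le
    have hsub3 : {β : Cardinal.{u} | β < γ ∧ r0 β ≠ fun _ => none} ⊆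
        {β | β < γ ∧ pf o1 β ≠ fun _ => none} ∪
        ⋃ x ∈ S, {β | β < γ ∧ x.1 β ≠ fun _ => none} := by
      rintro β ⟨hβγ, hβne⟩
      by_cases h : ∃ y, y ∈ S ∧ y.1 β ≠ (fun _ => none)
      · right
        exact Set.mem_biUnion (Classical.choose_spec h).1 ⟨hβγ, (Classical.choose_spec h).2⟩
      · left
        rw [r0eq, dif_neg h] at hβne
        rcases hq_cases β with h' | h'
        · rw [h'] at hβne; exact ⟨hβγ, hβne⟩
        · exact absurd h' hβne
    have hUn : ∀ T : Set (EastonCol κ lam), T.Finite →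
        #(↥(⋃ x ∈ T, {β : Cardinal.{u} | β < γ ∧ x.1 β ≠ fun _ => none})) <
          Cardinal.lift.{u+1} γ := fun T hT => aux_finUnion γ hγ hγlam hγℵ T hT
    refine lt_of_le_of_lt (Cardinal.mk_le_mk_of_subset hsub3) ?_
    exact lt_of_le_of_lt (Cardinal.mk_union_le _ _)
      (Cardinal.add_lt_of_lt hγℵ ((hcond o1 ho1O).2.2 γ hγ hγlam) (hUn S hSfin))
  refine ⟨⟨r0, hc1, hc2, hc3⟩, ?_⟩
  intro x hx
  intro β a b hb
  have hxne : x.1 β ≠ (fun _ => none) := fun he => by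
    rw [he] at hb; simp at hb
  have hex : ∃ y, y ∈ S ∧ y.1 β ≠ (fun _ => none) := ⟨x, hx, hxne⟩
  have hy := Classical.choose_spec hex
  show r0 β a = some b
  rw [r0eq, dif_pos hex]
  obtain ⟨j, rfl⟩ := hSB hx
  obtain ⟨j', hj'⟩ := hSB hy.1
  by_cases hβ0 : β.ord < δ0
  · have hx' : (e j).1 β = q β := by
      rw [he1 j]; exact hehead j β (hβ0.trans (heFib j).2)
    have hy' : (Classical.choose hex).1 β = q β := by
      rw [← hj', he1 j']; exact hehead j' β (hβ0.trans (heFib j').2)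
    rw [hy', ← hx']
    exact hb
  · have hxg : pf (F j.1) β ≠ (fun _ => none) := by rw [← he1 j]; exact hxne
    have hyg : pf (F j'.1) β ≠ (fun _ => none) := by rw [← he1 j', hj']; exact hy.2
    have hjj : j = j' := hpair j j' β hβ0 hxg hyg
    rw [← hj', ← hjj]
    exact hb
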